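/- Let c = 1/√2 and I = [√2/2, 2(√2-1)]. The sequence a(n) = ⌊cn + d⌋ satisfies the triple-nested identity a(a(a(n) + a(n-1))) = a(n) for all n ≥ 2 if and only if d ∈ I. -/

import Mathlib

open Real

/-- Every element of the subgroup generated by `{α, 1}` has the form `q*α + p`. -/
lemma mem_closure_form {α g : ℝ} (hg : g ∈ AddSubgroup.closure ({α, 1} : Set ℝ)) :
    ∃ q p : ℤ, g = q * α + p := by
  induction hg using AddSubgroup.closure_induction with
  | mem x hx =>
      rw [Set.mem_insert_iff, Set.mem_singleton_iff] at hx
      rcases hx with rfl | rfl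
      · exact ⟨1, 0, by simp⟩
      · exact ⟨0, 1, by simp⟩
  | zero => exact ⟨0, 0, by simp⟩
  | add x y _ _ hx hy =>
      obtain ⟨q1, p1, rfl⟩ := hx
      obtain ⟨q2, p2, rfl⟩ := hy
      exact ⟨q1 + q2, p1 + p2, by push_cast; ring⟩
  | neg x _ hx =>
      obtain ⟨q, p, rfl⟩ := hx
      exact ⟨-q, -p, by push_cast; ring⟩

/-- small positive step: for an irrational α there is q ≥ 1 with fract (q α) close to 0 or 1. -/
lemma small_step {α : ℝ} (hir : Irrational α) {ε : ℝ} (hε : 0 < ε) (hε1 : ε ≤ 1) :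
    ∃ q : ℤ, 1 ≤ q ∧ (Int.fract ((q : ℝ) * α) ∈ Set.Ioo 0 ε ∨
      Int.fract ((q : ℝ) * α) ∈ Set.Ioo (1 - ε) 1) := by
  rcases AddSubgroup.dense_or_cyclic (AddSubgroup.closure ({α, 1} : Set ℝ)) with hdense | ⟨a, ha⟩
  · obtain ⟨g, hgS, hg⟩ := hdense.exists_mem_open isOpen_Ioo
      (Set.nonempty_Ioo.mpr hε)
    obtain ⟨q, p, rfl⟩ := mem_closure_form hgS
    have hq0 : q ≠ 0 := by
      rintro rfl
      simp only [Int.cast_zero, zero_mul, zero_add] at hg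
      have h1 : (0 : ℝ) < p := hg.1
      have h2 : (p : ℝ) < 1 := lt_of_lt_of_le hg.2 hε1
      have : (0 : ℤ) < p := by exact_mod_cast h1
      have : (p : ℤ) < 1 := by exact_mod_cast h2
      omega
    have hfr : Int.fract ((q : ℝ) * α) = Int.fract ((q : ℝ) * α + p) := by
      rw [Int.fract_add_intCast]
    rcases lt_or_gt_of_ne hq0 with hq | hq
    · -- q < 0, use -q
      refine ⟨-q, by omega, Or.inr ?_⟩
      have h1 : ((-q : ℤ) : ℝ) * α = -((q : ℝ) * α) := by push_cast; ring
      have h2 : Int.fract ((q : ℝ) * α) = (q : ℝ) * α + p := by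
        rw [hfr]; exact Int.fract_eq_self.mpr ⟨le_of_lt hg.1, lt_of_lt_of_le hg.2 hε1⟩
      have h3 : Int.fract ((q : ℝ) * α) ≠ 0 := by rw [h2]; exact ne_of_gt hg.1
      rw [h1, Int.fract_neg h3, h2]
      constructor
      · linarith [hg.2]
      · linarith [hg.1]
    · refine ⟨q, hq, Or.inl ?_⟩
      rw [hfr]
      rwa [Int.fract_eq_self.mpr ⟨le_of_lt hg.1, lt_of_lt_of_le hg.2 hε1⟩]
  · exfalso
    have hα : α ∈ AddSubgroup.closure ({α, 1} : Set ℝ) :=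
      AddSubgroup.subset_closure (by simp)
    have h1 : (1 : ℝ) ∈ AddSubgroup.closure ({α, 1} : Set ℝ) :=
      AddSubgroup.subset_closure (by simp)
    rw [ha, AddSubgroup.mem_closure_singleton] at hα h1
    obtain ⟨m, hm⟩ := hα
    obtain ⟨k, hk⟩ := h1
    have hk0 : k ≠ 0 := by rintro rfl; simp at hk
    apply hir
    refine ⟨(m : ℚ) / (k : ℚ), ?_⟩
    have hkR : (k : ℝ) ≠ 0 := Int.cast_ne_zero.mpr hk0
    have hm' : (m : ℝ) * a = α := by rw [← hm]; push_cast [zsmul_eq_mul]; ring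
    have hk' : (k : ℝ) * a = 1 := by rw [← hk]; push_cast [zsmul_eq_mul]; ring
    push_cast
    field_simp
    linear_combination (k : ℝ) * hm' - (m : ℝ) * hk'

/-- climbing walk: steps of size δ upward hit any interval `[u, v)` of length > δ mod 1. -/
lemma walk_up (x0 : ℝ) {δ u v : ℝ} (hδ0 : 0 < δ) (hδ : δ < v - u) (hu : 0 ≤ u) (hv : v ≤ 1) :
    ∃ k : ℕ, Int.fract (x0 + k * δ) ∈ Set.Ico u v := by
  set j : ℤ := ⌈x0 - u⌉ with hj
  set w : ℝ := u + j with hw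
  have hwx : x0 ≤ w := by
    have := Int.le_ceil (x0 - u); rw [hw]; linarith
  set k : ℕ := ⌈(w - x0) / δ⌉₊ with hk
  have h1 : w ≤ x0 + k * δ := by
    have h := Nat.le_ceil ((w - x0) / δ)
    rw [div_le_iff₀ hδ0] at h
    linarith
  have h2 : x0 + k * δ < w + δ := by
    have h := Nat.ceil_lt_add_one (div_nonneg (by linarith) (le_of_lt hδ0) : (0:ℝ) ≤ (w - x0) / δ)
    rw [← hk] at h
    have := (mul_lt_mul_iff_left₀ hδ0).mpr h
    rw [add_mul, one_mul, div_mul_cancel₀ _ (ne_of_gt hδ0)] at this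
    linarith
  have hb1 : (j : ℝ) ≤ x0 + k * δ := by linarith
  have hb2 : x0 + k * δ < (j : ℝ) + 1 := by linarith
  have hfl : ⌊x0 + k * δ⌋ = j := Int.floor_eq_iff.mpr ⟨hb1, hb2⟩
  refine ⟨k, ?_, ?_⟩
  · rw [Int.fract, hfl]; linarith
  · rw [Int.fract, hfl]; linarith

/-- descending walk: steps of size δ close to 1 (i.e. small backwards steps). -/
lemma walk_down (x0 : ℝ) {δ u v : ℝ} (hδ0 : 0 < δ) (hδ1 : δ < 1) (hδ : 1 - δ < v - u)
    (hu : 0 ≤ u) (hv : v ≤ 1) :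
    ∃ k : ℕ, Int.fract (x0 + k * δ) ∈ Set.Ioo u v := by
  set γ : ℝ := 1 - δ with hγ
  have hγ0 : 0 < γ := by rw [hγ]; linarith
  set j : ℤ := ⌊x0 - v⌋ with hj
  set w : ℝ := v + j with hw
  have hwx : w ≤ x0 := by
    have := Int.floor_le (x0 - v); rw [hw]; linarith
  set k : ℕ := ⌊(x0 - w) / γ⌋₊ + 1 with hk
  have h1 : x0 - k * γ < w := by
    have h := Nat.lt_floor_add_one ((x0 - w) / γ)
    rw [div_lt_iff₀ hγ0] at h
    have : ((⌊(x0 - w) / γ⌋₊ : ℝ) + 1) * γ = (k : ℝ) * γ := by rw [hk]; push_cast; ring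
    linarith [this ▸ h]
  have h2 : w - γ ≤ x0 - k * γ := by
    have h' : (⌊(x0 - w) / γ⌋₊ : ℝ) * γ ≤ x0 - w := by
      have ht := Nat.floor_le (div_nonneg (by linarith) (le_of_lt hγ0) : (0:ℝ) ≤ (x0 - w) / γ)
      calc (⌊(x0 - w) / γ⌋₊ : ℝ) * γ ≤ ((x0 - w) / γ) * γ :=
            mul_le_mul_of_nonneg_right ht (le_of_lt hγ0)
        _ = x0 - w := by field_simp
    have hkk : (k : ℝ) * γ = (⌊(x0 - w) / γ⌋₊ : ℝ) * γ + γ := by rw [hk]; push_cast; ring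
    nlinarith [h', hkk]
  have hval : x0 + k * δ = (x0 - k * γ) + k := by rw [hγ]; ring
  have hfr : Int.fract (x0 + k * δ) = Int.fract (x0 - k * γ) := by
    rw [hval]
    have : (x0 - k * γ) + (k : ℝ) = (x0 - k * γ) + ((k : ℤ) : ℝ) := by push_cast; ring
    rw [this, Int.fract_add_intCast]
  have hb1 : (j : ℝ) ≤ x0 - k * γ := by linarith
  have hb2 : x0 - k * γ < (j : ℝ) + 1 := by linarith
  have hfl : ⌊x0 - k * γ⌋ = j := Int.floor_eq_iff.mpr ⟨hb1, hb2⟩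
  refine ⟨k, ?_, ?_⟩
  · rw [hfr, Int.fract, hfl]; linarith
  · rw [hfr, Int.fract, hfl]; linarith

/-- density of the forward orbit of an irrational rotation. -/
lemma fract_dense {α : ℝ} (hir : Irrational α) (β : ℝ) {u v : ℝ} (hu : 0 ≤ u) (huv : u < v)
    (hv : v ≤ 1) (N : ℤ) : ∃ n : ℤ, N ≤ n ∧ Int.fract (α * n + β) ∈ Set.Ioo u v := by
  set ε : ℝ := (v - u) / 3 with hε
  have hε0 : 0 < ε := by rw [hε]; linarith
  have hε1 : ε ≤ 1 := by rw [hε]; linarith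
  obtain ⟨q, hq1, hcase⟩ := small_step hir hε0 hε1
  set δ : ℝ := Int.fract ((q : ℝ) * α) with hδ
  have hkey : ∀ k : ℕ, Int.fract (α * ((N + k * q : ℤ) : ℝ) + β)
      = Int.fract ((α * N + β) + k * δ) := by
    intro k
    have hcast : α * ((N + k * q : ℤ) : ℝ) + β
        = ((α * N + β) + k * δ) + ((k : ℤ) * ⌊(q : ℝ) * α⌋ : ℤ) := by
      rw [hδ, Int.fract]
      push_cast
      ring
    rw [hcast, Int.fract_add_intCast]
  have hge : ∀ k : ℕ, N ≤ N + k * q := by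
    intro k
    have : 0 ≤ (k : ℤ) * q := mul_nonneg (Int.natCast_nonneg k) (by omega)
    omega
  rcases hcase with h | h
  · -- δ ∈ (0, ε) : climb up into [u+ε, v-ε) ⊆ (u,v)
    obtain ⟨k, hk⟩ := walk_up (α * N + β) (δ := δ) (u := u + ε) (v := v - ε) h.1
      (by linarith [h.2]) (by linarith) (by linarith)
    exact ⟨N + k * q, hge k, by rw [hkey k]; exact ⟨by linarith [hk.1], by linarith [hk.2]⟩⟩
  · obtain ⟨k, hk⟩ := walk_down (α * N + β) (δ := δ) (u := u) (v := v)
      (by linarith [h.1]) h.2 (by linarith [h.1]) hu hv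
    exact ⟨N + k * q, hge k, by rw [hkey k]; exact hk⟩

set_option maxHeartbeats 1600000 in
theorem stmt13 (c : ℝ) (hc : c = 1 / Real.sqrt 2) (d : ℝ)
    (a : ℤ → ℤ) (ha : ∀ n : ℤ, a n = ⌊c * n + d⌋) :
    (∀ n : ℤ, 2 ≤ n → a (a (a n + a (n - 1))) = a n) ↔
      d ∈ Set.Icc (Real.sqrt 2 / 2) (2 * (Real.sqrt 2 - 1)) := by
  have hs0 : (0:ℝ) < Real.sqrt 2 := Real.sqrt_pos.mpr (by norm_num)
  have hs2 : Real.sqrt 2 * Real.sqrt 2 = 2 := Real.mul_self_sqrt (by norm_num)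
  set s : ℝ := Real.sqrt 2 with hsdef
  have h14 : 1.4 < s := by nlinarith
  have h15 : s < 1.5 := by nlinarith
  have hcs : c * s = 1 := by rw [hc]; field_simp
  have h2c : 2 * c = s := by
    rw [hc]; field_simp; linarith [hs2]
  have hc0 : 0 < c := by rw [hc]; positivity
  have hc1 : c < 1 := by nlinarith
  have hc2 : c * c = 1 / 2 := by nlinarith
  have hcs2 : c = s / 2 := by
    rw [hc]; field_simp; linarith [hs2]
  have hirr_c : Irrational c := by
    have h : Irrational (Real.sqrt 2 / (2 : ℕ)) := irrational_sqrt_two.div_natCast two_ne_zero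
    rw [hcs2, hsdef]
    simpa using h
  set X : ℤ → ℝ := fun n => Int.fract (c * n + d) with hX
  set E : ℤ → ℝ := fun n => (s + 1) * d - 1 / 2 - c * (X n + X (n - 1)) with hE
  have hX0 : ∀ n : ℤ, 0 ≤ X n := fun n => Int.fract_nonneg _
  have hX1 : ∀ n : ℤ, X n < 1 := fun n => Int.fract_lt_one _
  have hXa : ∀ n : ℤ, (c * n + d) = (a n : ℝ) + X n := by
    intro n
    rw [ha n]
    simp only [hX]
    rw [Int.fract]
    ring
  -- relation between X (n-1) and X n
  have hXrel : ∀ n : ℤ, X (n - 1) = Int.fract (X n - c) := by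
    intro n
    have h1 : c * ((n : ℝ) - 1) + d = (X n - c) + (⌊c * n + d⌋ : ℝ) := by
      rw [hX]; simp only [Int.fract]; ring
    have h2 : ((n - 1 : ℤ) : ℝ) = (n : ℝ) - 1 := by push_cast; ring
    rw [hX]
    simp only [h2, h1]
    rw [show (X n - c) + (⌊c * n + d⌋ : ℝ) = (X n - c) + ((⌊c * n + d⌋ : ℤ) : ℝ) by norm_num,
      Int.fract_add_intCast]
  have hErel1 : ∀ n : ℤ, c ≤ X n → E n = (s + 1) * d - s * X n := by
    intro n hn
    have h1 : X (n - 1) = X n - c := by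
      rw [hXrel n, Int.fract_eq_self.mpr ⟨by linarith, by linarith [hX1 n]⟩]
    simp only [hE, h1]
    linear_combination hc2 - X n * h2c
  have hErel2 : ∀ n : ℤ, X n < c → E n = (s + 1) * d - s * X n - c := by
    intro n hn
    have h1 : X (n - 1) = X n - c + 1 := by
      rw [hXrel n]
      have he : Int.fract (X n - c) = Int.fract ((X n - c + 1) + ((-1 : ℤ) : ℝ)) := by
        norm_num
      rw [he, Int.fract_add_intCast, Int.fract_eq_self.mpr ⟨by linarith [hX0 n], by linarith⟩]
    simp only [hE, h1]
    linear_combination hc2 - X n * h2c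
  -- the key computation
  have hstep : ∀ n : ℤ, a (a (a n + a (n - 1))) = ⌊(c * n + d) + c * (⌊E n⌋ : ℝ)⌋ := by
    intro n
    have h1 : ((a n : ℝ)) = c * n + d - X n := by linarith [hXa n]
    have h2 : ((a (n - 1) : ℝ)) = c * (n - 1) + d - X (n - 1) := by
      have := hXa (n - 1); push_cast at this ⊢; linarith
    have key : c * ((a n + a (n - 1) : ℤ) : ℝ) + d = (n : ℝ) + E n := by
      simp only [hE]
      push_cast
      linear_combination c * h1 + c * h2 + (2 * (n : ℝ) - 1) * hc2 + d * h2c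
    have ham : a (a n + a (n - 1)) = n + ⌊E n⌋ := by
      rw [ha, key, Int.floor_intCast_add]
    rw [ham, ha]
    congr 1
    push_cast
    ring
  constructor
  · -- forward: identity ⇒ d ∈ I
    intro H
    by_contra hmem
    rw [Set.mem_Icc, not_and_or] at hmem
    push_neg at hmem
    rcases hmem with hd | hd
    · -- d < s/2
      have hL : max (((s + 1) * d - c) / s) 0 < c := by
        apply max_lt _ hc0
        rw [div_lt_iff₀ hs0]
        nlinarith
      obtain ⟨n, hn2, hx⟩ := fract_dense hirr_c d (le_max_right _ 0) hL (le_of_lt hc1) 2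
      have hxX : X n ∈ Set.Ioo (max (((s + 1) * d - c) / s) 0) c := by rw [hX]; exact hx
      have hxc : X n < c := hxX.2
      have hxL : ((s + 1) * d - c) / s < X n := lt_of_le_of_lt (le_max_left _ _) hxX.1
      have hEn : E n < 0 := by
        rw [hErel2 n hxc]
        rw [div_lt_iff₀ hs0] at hxL
        nlinarith
      have hk : ⌊E n⌋ ≤ -1 := by
        have : ⌊E n⌋ < 0 := Int.floor_lt.mpr (by exact_mod_cast hEn)
        omega
      have hlt : a (a (a n + a (n - 1))) < a n := by
        rw [hstep n]
        apply Int.floor_lt.mpr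
        have hck : c * (⌊E n⌋ : ℝ) ≤ c * (-1) := by
          apply mul_le_mul_of_nonneg_left _ (le_of_lt hc0)
          exact_mod_cast hk
        have := hXa n
        linarith
      have := H n hn2
      omega
    · -- d > 2(s-1)
      have hL : c < min (((s + 1) * d - 1) / s) 1 := by
        apply lt_min _ hc1
        rw [lt_div_iff₀ hs0]
        nlinarith
      obtain ⟨n, hn2, hx⟩ := fract_dense hirr_c d (le_of_lt hc0) hL (min_le_right _ 1) 2
      have hxX : X n ∈ Set.Ioo c (min (((s + 1) * d - 1) / s) 1) := by rw [hX]; exact hx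
      have hxc : c < X n := hxX.1
      have hxU : X n < ((s + 1) * d - 1) / s := lt_of_lt_of_le hxX.2 (min_le_left _ _)
      have hEn : 1 < E n := by
        rw [hErel1 n (le_of_lt hxc)]
        rw [lt_div_iff₀ hs0] at hxU
        nlinarith
      have hk : 1 ≤ ⌊E n⌋ := Int.le_floor.mpr (by exact_mod_cast (le_of_lt hEn))
      have hlt : a n + 1 ≤ a (a (a n + a (n - 1))) := by
        rw [hstep n]
        apply Int.le_floor.mpr
        have hck : c * 1 ≤ c * (⌊E n⌋ : ℝ) := by
          apply mul_le_mul_of_nonneg_left _ (le_of_lt hc0)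
          exact_mod_cast hk
        have := hXa n
        push_cast
        nlinarith
      have := H n hn2
      omega
  · -- backward: d ∈ I ⇒ identity
    intro hdI n hn2
    obtain ⟨hd1, hd2⟩ := Set.mem_Icc.mp hdI
    have hd1' : c ≤ d := by nlinarith
    rw [hstep n]
    by_cases hxc : c ≤ X n
    · -- k = 0
      have hE0 : 0 ≤ E n := by
        rw [hErel1 n hxc]
        nlinarith [hX1 n]
      have hE1 : E n < 1 := by
        rw [hErel1 n hxc]
        rcases lt_or_eq_of_le hxc with hlt | heq
        · nlinarith
        · rcases lt_or_eq_of_le hd2 with hdlt | hdeq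
          · nlinarith
          · exfalso
            -- X n = c and d = 2(s-1): contradiction with irrationality of √2
            have heq' : c * (n : ℝ) + d - (a n : ℝ) = c := by
              have hh := hXa n
              rw [← heq] at hh
              linarith
            have hkey : s * ((n : ℝ) + 3) = 2 * (a n : ℝ) + 4 := by
              linear_combination 2 * heq' - 2 * hdeq + (1 - (n : ℝ)) * h2c
            apply irrational_sqrt_two
            refine ⟨(2 * (a n : ℚ) + 4) / ((n : ℚ) + 3), ?_⟩
            have hn3 : ((n : ℝ) + 3) ≠ 0 := by
              intro h
              have h1 : (n : ℝ) = -3 := by linarith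
              have h2 : n = -3 := by exact_mod_cast h1
              omega
            push_cast
            rw [div_eq_iff hn3]
            rw [hsdef] at hkey
            linarith [hkey]
      have hk : ⌊E n⌋ = 0 := Int.floor_eq_zero_iff.mpr ⟨hE0, hE1⟩
      rw [hk, ha n]
      norm_num
    · push_neg at hxc
      have hE0 : 0 ≤ E n := by
        rw [hErel2 n hxc]
        linarith [mul_le_mul_of_nonneg_left hd1 (by linarith : (0:ℝ) ≤ s + 1),
          mul_lt_mul_of_pos_left hxc hs0, hs2, hcs, hcs2]
      by_cases hE1 : E n < 1
      · have hk : ⌊E n⌋ = 0 := Int.floor_eq_zero_iff.mpr ⟨hE0, hE1⟩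
        rw [hk, ha n]
        norm_num
      · push_neg at hE1
        have hE2 : E n < 2 := by
          rw [hErel2 n hxc]
          linarith [mul_le_mul_of_nonneg_left hd2 (by linarith : (0:ℝ) ≤ s + 1),
            mul_nonneg (le_of_lt hs0) (hX0 n), hs2, hc0]
        have hk : ⌊E n⌋ = 1 := by
          rw [Int.floor_eq_iff]
          constructor
          · push_cast; exact hE1
          · push_cast; linarith [hE2]
        rw [hk]
        have hxsmall : X n + c < 1 := by
          rw [hErel2 n hxc] at hE1
          nlinarith
        have hval : (c * n + d) + c * ((1 : ℤ) : ℝ) = ((a n : ℤ) : ℝ) + (X n + c) := by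
          have := hXa n
          push_cast
          linarith
        rw [hval, Int.floor_intCast_add, Int.floor_eq_zero_iff.mpr
          ⟨by linarith [hX0 n, hc0], hxsmall⟩]
        omega
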